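/- Quantum-hash state collapse: let d ≥ 2, m ∈ ℕ, k₁, …, k_m ∈ {0, …, d−1}, and S ⊆ {1, …, m}. Applying, for each i ∈ S, the pair of controlled-X gates (c-X)_{A₀A_i} and (c-X)_{B₀B_i} to the state |φ^{0,0}⟩_{A₀B₀} ⊗ |φ^{0,k₁}⟩_{A₁B₁} ⊗ ⋯ ⊗ |φ^{0,k_m}⟩_{A_mB_m} produces the state |φ^{0, −Σ_{i∈S} k_i}⟩_{A₀B₀} ⊗ |φ^{0,k₁}⟩_{A₁B₁} ⊗ ⋯ ⊗ |φ^{0,k_m}⟩_{A_mB_m}; in particular the states on the registers A₁B₁, …, A_mB_m remain unchanged. -/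

import Mathlib

open Matrix

noncomputable def ω (d : ℕ) : ℂ := Complex.exp (2 * Real.pi * Complex.I / d)

/-- The generalized Pauli `X` on `ℂ^d`: `X |k⟩ = |k+1 mod d⟩`. -/
def Xmat (d : ℕ) [NeZero d] : Matrix (ZMod d) (ZMod d) ℂ :=
  Matrix.of fun i k => if i = k + 1 then 1 else 0

def XmatInv (d : ℕ) [NeZero d] : Matrix (ZMod d) (ZMod d) ℂ :=
  Matrix.of fun i k => if k = i + 1 then 1 else 0

lemma Xmat_mul_XmatInv (d : ℕ) [NeZero d] : Xmat d * XmatInv d = 1 := by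
  ext i k
  rw [Matrix.mul_apply, Finset.sum_eq_single (i - 1)]
  · simp only [Xmat, XmatInv, Matrix.of_apply, sub_add_cancel, Matrix.one_apply]
    simp [eq_comm]
  · intro c _ hc
    have h : i ≠ c + 1 := fun h => hc (by rw [h, add_sub_cancel_right])
    simp [Xmat, Matrix.of_apply, h]
  · intro h; exact absurd (Finset.mem_univ _) h

/-- `X` as a unit (invertible matrix), so that integer powers `X ^ (j : ℤ)` make sense. -/
noncomputable def XU (d : ℕ) [NeZero d] : (Matrix (ZMod d) (ZMod d) ℂ)ˣ :=
  ⟨Xmat d, XmatInv d, Xmat_mul_XmatInv d, mul_eq_one_comm.mp (Xmat_mul_XmatInv d)⟩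

/-- The generalized Pauli `Z` on `ℂ^d`: `Z |k⟩ = ω^k |k⟩`. -/
noncomputable def Zmat (d : ℕ) [NeZero d] : Matrix (ZMod d) (ZMod d) ℂ :=
  Matrix.diagonal fun i => ω d ^ i.val

lemma omega_ne_zero (d : ℕ) : ω d ≠ 0 := Complex.exp_ne_zero _

/-- `Z` as a unit (invertible matrix). -/
noncomputable def ZU (d : ℕ) [NeZero d] : (Matrix (ZMod d) (ZMod d) ℂ)ˣ :=
  ⟨Zmat d, Matrix.diagonal fun i => (ω d ^ i.val)⁻¹,
   by
    rw [Zmat, Matrix.diagonal_mul_diagonal]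
    have h : (fun i : ZMod d => ω d ^ i.val * (ω d ^ i.val)⁻¹) = fun _ => (1 : ℂ) := by
      funext i
      exact mul_inv_cancel₀ (pow_ne_zero _ (omega_ne_zero d))
    rw [h, Matrix.diagonal_one],
   by
    rw [Zmat, Matrix.diagonal_mul_diagonal]
    have h : (fun i : ZMod d => (ω d ^ i.val)⁻¹ * ω d ^ i.val) = fun _ => (1 : ℂ) := by
      funext i
      exact inv_mul_cancel₀ (pow_ne_zero _ (omega_ne_zero d))
    rw [h, Matrix.diagonal_one]⟩

/-- Integer power `X^j` of the generalized Pauli `X`. -/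
noncomputable def Xpow (d : ℕ) [NeZero d] (j : ℤ) : Matrix (ZMod d) (ZMod d) ℂ := ↑(XU d ^ j)

/-- Integer power `Z^k` of the generalized Pauli `Z`. -/
noncomputable def Zpow (d : ℕ) [NeZero d] (k : ℤ) : Matrix (ZMod d) (ZMod d) ℂ := ↑(ZU d ^ k)

/-- The maximally entangled state `|φ⟩ = (1/√d) ∑ i, |i⟩⊗|i⟩` on `ℂ^d ⊗ ℂ^d`. -/
noncomputable def phi (d : ℕ) [NeZero d] : ZMod d × ZMod d → ℂ :=
  (1 / (Real.sqrt d : ℂ)) •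
    ∑ i : ZMod d, fun p : ZMod d × ZMod d =>
      (if p.1 = i then (1 : ℂ) else 0) * (if p.2 = i then 1 else 0)

/-- The Bell state `|φ^{j,k}⟩ = (X^j Z^k ⊗ I)|φ⟩` (exponents mod `d`). -/
noncomputable def bell (d : ℕ) [NeZero d] (j k : ℤ) : ZMod d × ZMod d → ℂ :=
  Matrix.mulVec
    (Matrix.kroneckerMap (· * ·) (Xpow d j * Zpow d k) (1 : Matrix (ZMod d) (ZMod d) ℂ))
    (phi d)

/-- Embed a two-qudit gate `G` into a multi-register system, acting on registers `r` (first
tensor factor of `G`) and `s` (second tensor factor of `G`), identity elsewhere. -/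
def gate2 {ι : Type*} [Fintype ι] [DecidableEq ι] (d : ℕ) [NeZero d]
    (G : Matrix (ZMod d × ZMod d) (ZMod d × ZMod d) ℂ) (r s : ι) :
    Matrix (ι → ZMod d) (ι → ZMod d) ℂ :=
  Matrix.of fun p q =>
    if ∀ t, t ≠ r → t ≠ s → p t = q t then G (p r, p s) (q r, q s) else 0

/-- Embed a single-qudit gate `M` into a multi-register system, acting on register `r`. -/
def gate1 {ι : Type*} [Fintype ι] [DecidableEq ι] (d : ℕ) [NeZero d]
    (M : Matrix (ZMod d) (ZMod d) ℂ) (r : ι) :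
    Matrix (ι → ZMod d) (ι → ZMod d) ℂ :=
  Matrix.of fun p q => if ∀ t, t ≠ r → p t = q t then M (p r) (q r) else 0

/-- The controlled gate `c-U` on `ℂ^d ⊗ ℂ^d`: `(c-U)|j⟩|k⟩ = |j⟩ ⊗ U^j |k⟩`, the first factor
being the control register. -/
noncomputable def ctrl (d : ℕ) [NeZero d] (U : (Matrix (ZMod d) (ZMod d) ℂ)ˣ) :
    Matrix (ZMod d × ZMod d) (ZMod d × ZMod d) ℂ :=
  Matrix.of fun p q =>
    if p.1 = q.1 then ((U ^ q.1.val : (Matrix (ZMod d) (ZMod d) ℂ)ˣ) : Matrix (ZMod d) (ZMod d) ℂ) p.2 q.2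
    else 0

section Aux

variable (d : ℕ) [NeZero d]

lemma omega_pow_d : ω d ^ d = 1 := by
  rw [ω, ← Complex.exp_nat_mul]
  have hd : (d : ℂ) ≠ 0 := Nat.cast_ne_zero.mpr (NeZero.ne d)
  rw [show (d : ℂ) * (2 * Real.pi * Complex.I / d) = 2 * Real.pi * Complex.I by
    field_simp]
  exact Complex.exp_two_pi_mul_I

lemma omega_pow_mod (n : ℕ) : ω d ^ (n % d) = ω d ^ n := by
  conv_rhs => rw [← Nat.mod_add_div n d]
  rw [pow_add, pow_mul, omega_pow_d, one_pow, mul_one]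

lemma omega_pow_val_add (a b : ZMod d) :
    ω d ^ (a + b).val = ω d ^ a.val * ω d ^ b.val := by
  rw [ZMod.val_add, omega_pow_mod, pow_add]

lemma phi_apply (p : ZMod d × ZMod d) :
    phi d p = if p.1 = p.2 then (1 / (Real.sqrt d : ℂ)) else 0 := by
  rw [phi]
  simp only [Pi.smul_apply, Finset.sum_apply, smul_eq_mul]
  rw [Finset.sum_eq_single p.1]
  · by_cases h : p.1 = p.2
    · rw [if_pos rfl, if_pos h.symm, if_pos h, one_mul, mul_one]
    · rw [if_pos rfl, one_mul, if_neg (fun hh => h hh.symm), mul_zero, if_neg h]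
  · intro c _ hc
    simp [Ne.symm hc]
  · intro h; exact absurd (Finset.mem_univ _) h

lemma Xpow_zero : Xpow d 0 = 1 := by
  rw [Xpow, zpow_zero, Units.val_one]

lemma ZU_pow_coe (n : ℕ) :
    ((ZU d ^ n : (Matrix (ZMod d) (ZMod d) ℂ)ˣ) : Matrix (ZMod d) (ZMod d) ℂ)
      = Matrix.diagonal fun a => (ω d ^ a.val) ^ n := by
  rw [Units.val_pow_eq_pow_val]
  show Zmat d ^ n = _
  rw [Zmat, Matrix.diagonal_pow]
  rfl

lemma Zpow_eq (K : ℤ) :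
    Zpow d K = Matrix.diagonal fun a => (ω d ^ a.val) ^ K := by
  rcases K with n | n
  · rw [Zpow, Int.ofNat_eq_coe, zpow_natCast, ZU_pow_coe]
    congr 1
  · rw [Zpow, zpow_negSucc]
    have hinv : (((ZU d ^ (n + 1))⁻¹ : (Matrix (ZMod d) (ZMod d) ℂ)ˣ) :
        Matrix (ZMod d) (ZMod d) ℂ)
        = Matrix.diagonal fun a => ((ω d ^ a.val) ^ (n + 1))⁻¹ := by
      apply Units.inv_eq_of_mul_eq_one_right
      rw [ZU_pow_coe, Matrix.diagonal_mul_diagonal]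
      have h : (fun a : ZMod d => (ω d ^ a.val) ^ (n + 1) * ((ω d ^ a.val) ^ (n + 1))⁻¹)
          = fun _ => (1 : ℂ) := by
        funext a
        exact mul_inv_cancel₀ (pow_ne_zero _ (pow_ne_zero _ (omega_ne_zero d)))
      rw [h, Matrix.diagonal_one]
    rw [hinv]
    congr 1

lemma bell_apply (K : ℤ) (a b : ZMod d) :
    bell d 0 K (a, b) = if a = b then (ω d ^ a.val) ^ K * (1 / (Real.sqrt d : ℂ)) else 0 := by
  rw [bell, Xpow_zero, one_mul, Zpow_eq]
  have h1 : (1 : Matrix (ZMod d) (ZMod d) ℂ) = Matrix.diagonal fun _ => (1 : ℂ) :=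
    (Matrix.diagonal_one).symm
  rw [h1, Matrix.diagonal_kronecker_diagonal, Matrix.mulVec_diagonal, phi_apply]
  by_cases h : a = b <;> simp [h]

lemma XU_pow_coe_apply (n : ℕ) (i j : ZMod d) :
    ((XU d ^ n : (Matrix (ZMod d) (ZMod d) ℂ)ˣ) : Matrix (ZMod d) (ZMod d) ℂ) i j
      = if i = j + (n : ZMod d) then 1 else 0 := by
  induction n generalizing i j with
  | zero => simp [Matrix.one_apply]
  | succ n ih =>
    rw [pow_succ', Units.val_mul, Matrix.mul_apply]
    rw [Finset.sum_eq_single (i - 1)]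
    · show Xmat d i (i - 1) * _ = _
      have hXi : Xmat d i (i - 1) = 1 := by
        simp [Xmat, sub_add_cancel]
      rw [hXi, one_mul, ih]
      have hiff : (i - 1 = j + (n : ZMod d)) ↔ (i = j + ((n + 1 : ℕ) : ZMod d)) := by
        push_cast
        rw [sub_eq_iff_eq_add]
        constructor
        · intro h; rw [h]; ring
        · intro h; rw [h]; ring
      by_cases h : i - 1 = j + (n : ZMod d)
      · rw [if_pos h, if_pos (hiff.mp h)]
      · rw [if_neg h, if_neg (fun hh => h (hiff.mpr hh))]
    · intro c _ hc
      show Xmat d i c * _ = 0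
      have h : i ≠ c + 1 := fun h => hc (by rw [h, add_sub_cancel_right])
      rw [Xmat]; simp [h]
    · intro h; exact absurd (Finset.mem_univ _) h

lemma ctrl_XU_apply (p q : ZMod d × ZMod d) :
    ctrl d (XU d) p q = if p.1 = q.1 ∧ p.2 = q.2 + q.1 then 1 else 0 := by
  rw [ctrl]
  simp only [Matrix.of_apply, XU_pow_coe_apply]
  have hv : ((q.1.val : ℕ) : ZMod d) = q.1 := ZMod.natCast_rightInverse q.1
  by_cases h1 : p.1 = q.1
  · rw [if_pos h1, hv]
    by_cases h2 : p.2 = q.2 + q.1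
    · rw [if_pos h2, if_pos ⟨h1, h2⟩]
    · rw [if_neg h2, if_neg (fun h => h2 h.2)]
  · rw [if_neg h1, if_neg (fun h => h1 h.1)]

lemma gate2_ctrlX_mulVec {ι : Type*} [Fintype ι] [DecidableEq ι] (r s : ι) (hrs : r ≠ s)
    (v : (ι → ZMod d) → ℂ) :
    (gate2 d (ctrl d (XU d)) r s).mulVec v
      = fun p => v (Function.update p s (p s - p r)) := by
  funext p
  rw [Matrix.mulVec, dotProduct]
  rw [Finset.sum_eq_single (Function.update p s (p s - p r))]
  · have hall : ∀ t, t ≠ r → t ≠ s → p t = Function.update p s (p s - p r) t := by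
      intro t _ hts
      rw [Function.update_of_ne hts]
    have hr : Function.update p s (p s - p r) r = p r := Function.update_of_ne hrs _ _
    have hs : Function.update p s (p s - p r) s = p s - p r := Function.update_self _ _ _
    rw [gate2]
    simp only [Matrix.of_apply, if_pos hall, hr, hs, ctrl_XU_apply]
    simp [sub_add_cancel]
  · intro q _ hq
    rw [gate2]
    simp only [Matrix.of_apply]
    by_cases hall : ∀ t, t ≠ r → t ≠ s → p t = q t
    · rw [if_pos hall, ctrl_XU_apply]
      by_cases hc : p r = q r ∧ p s = q s + q r
      · exfalso
        apply hq
        funext t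
        by_cases hts : t = s
        · subst hts
          rw [Function.update_self, eq_sub_iff_add_eq, hc.1]
          exact hc.2.symm
        · rw [Function.update_of_ne hts]
          by_cases htr : t = r
          · subst htr; exact (hc.1).symm
          · exact (hall t htr hts).symm
      · rw [if_neg hc, zero_mul]
    · rw [if_neg hall, zero_mul]
  · intro h; exact absurd (Finset.mem_univ _) h

lemma bell_shift (K ki : ℤ) (a0 b0 ai bi : ZMod d) :
    bell d 0 K (a0, b0) * bell d 0 ki (ai - a0, bi - b0)
      = bell d 0 (K - ki) (a0, b0) * bell d 0 ki (ai, bi) := by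
  rw [bell_apply, bell_apply, bell_apply, bell_apply]
  by_cases h0 : a0 = b0
  · subst h0
    by_cases hi : ai = bi
    · subst hi
      rw [if_pos rfl, if_pos rfl, if_pos rfl, if_pos rfl]
      have hx : (ω d ^ a0.val : ℂ) ≠ 0 := pow_ne_zero _ (omega_ne_zero d)
      have hy : (ω d ^ (ai - a0).val : ℂ) = ω d ^ ai.val * (ω d ^ a0.val)⁻¹ := by
        have := omega_pow_val_add d (ai - a0) a0
        rw [sub_add_cancel] at this
        field_simp [this]
        exact this.symm
      rw [hy, mul_zpow, _root_.inv_zpow, zpow_sub₀ hx]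
      have hxk : (ω d ^ a0.val : ℂ) ^ ki ≠ 0 := zpow_ne_zero _ hx
      field_simp
    · have h1 : ¬ (ai - a0 = bi - a0) := fun h => hi (by
        have := sub_left_inj.mp h; exact this)
      rw [if_neg h1, if_neg hi, mul_zero, mul_zero]
  · rw [if_neg h0, if_neg h0, zero_mul, zero_mul]

variable (m : ℕ) (k : Fin m → Fin d)

/-- The intermediate state with accumulated exponent `K` on the `A₀B₀` Bell pair. -/
noncomputable def st (K : ℤ) : (Fin (m + 1) × Bool → ZMod d) → ℂ :=
  fun p =>
    bell d 0 K (p (0, false), p (0, true)) *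
      ∏ i : Fin m, bell d 0 ((k i : ℕ) : ℤ) (p (i.succ, false), p (i.succ, true))

lemma step (i : Fin m) (K : ℤ) :
    (gate2 d (ctrl d (XU d)) ((0 : Fin (m + 1)), false) (i.succ, false) *
        gate2 d (ctrl d (XU d)) ((0 : Fin (m + 1)), true) (i.succ, true)).mulVec
      (st d m k K) = st d m k (K - ((k i : ℕ) : ℤ)) := by
  have hne : (i.succ : Fin (m + 1)) ≠ 0 := Fin.succ_ne_zero i
  have hA : ((0 : Fin (m + 1)), false) ≠ ((i.succ : Fin (m + 1)), false) := by
    simp [hne.symm]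
  have hB : ((0 : Fin (m + 1)), true) ≠ ((i.succ : Fin (m + 1)), true) := by
    simp [hne.symm]
  rw [← Matrix.mulVec_mulVec, gate2_ctrlX_mulVec d _ _ hB, gate2_ctrlX_mulVec d _ _ hA]
  funext p
  set p' : Fin (m + 1) × Bool → ZMod d :=
    Function.update
      (Function.update p ((i.succ : Fin (m + 1)), false)
        (p (i.succ, false) - p (0, false)))
      ((i.succ : Fin (m + 1)), true)
      (Function.update p ((i.succ : Fin (m + 1)), false)
        (p (i.succ, false) - p (0, false)) (i.succ, true) -
       Function.update p ((i.succ : Fin (m + 1)), false)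
        (p (i.succ, false) - p (0, false)) (0, true)) with hp'
  show st d m k K p' = _
  have hft : ((i.succ : Fin (m + 1)), false) ≠ ((i.succ : Fin (m + 1)), true) := by simp
  have h0f : p' (0, false) = p (0, false) := by
    rw [hp', Function.update_of_ne (by simp [hne.symm]),
        Function.update_of_ne (by simp [hne.symm])]
  have h0t : p' (0, true) = p (0, true) := by
    rw [hp', Function.update_of_ne (by simp [hne.symm]),
        Function.update_of_ne (by simp [hne.symm])]
  have hif : p' (i.succ, false) = p (i.succ, false) - p (0, false) := by
    rw [hp', Function.update_of_ne hft, Function.update_self]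
  have hit : p' (i.succ, true) = p (i.succ, true) - p (0, true) := by
    rw [hp', Function.update_self, Function.update_of_ne hft.symm,
        Function.update_of_ne (by simp [hne.symm])]
  have hother : ∀ j : Fin m, j ≠ i →
      p' (j.succ, false) = p (j.succ, false) ∧ p' (j.succ, true) = p (j.succ, true) := by
    intro j hj
    have hsucc : (j.succ : Fin (m + 1)) ≠ i.succ := fun h => hj (Fin.succ_injective m h)
    constructor
    · rw [hp', Function.update_of_ne (by simp [hsucc]),
          Function.update_of_ne (by simp [hsucc])]
    · rw [hp', Function.update_of_ne (by simp [hsucc]),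
          Function.update_of_ne (by simp [hsucc])]
  rw [st, st]
  rw [h0f, h0t]
  rw [← Finset.mul_prod_erase Finset.univ _ (Finset.mem_univ i),
      ← Finset.mul_prod_erase Finset.univ
        (fun j => bell d 0 ((k j : ℕ) : ℤ) (p (j.succ, false), p (j.succ, true)))
        (Finset.mem_univ i)]
  have hprod : ∏ j ∈ Finset.univ.erase i,
      bell d 0 ((k j : ℕ) : ℤ) (p' (j.succ, false), p' (j.succ, true))
      = ∏ j ∈ Finset.univ.erase i,
      bell d 0 ((k j : ℕ) : ℤ) (p (j.succ, false), p (j.succ, true)) := by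
    apply Finset.prod_congr rfl
    intro j hj
    have hji : j ≠ i := (Finset.mem_erase.mp hj).1
    rw [(hother j hji).1, (hother j hji).2]
  rw [hprod, hif, hit, ← mul_assoc, ← mul_assoc,
      bell_shift d K ((k i : ℕ) : ℤ) (p (0, false)) (p (0, true))
        (p (i.succ, false)) (p (i.succ, true))]

lemma main_list (l : List (Fin m)) (K : ℤ) :
    ((l.map fun i : Fin m =>
        gate2 d (ctrl d (XU d)) ((0 : Fin (m + 1)), false) (i.succ, false) *
          gate2 d (ctrl d (XU d)) ((0 : Fin (m + 1)), true) (i.succ, true)).prod).mulVec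
      (st d m k K)
      = st d m k (K - (l.map fun i => ((k i : ℕ) : ℤ)).sum) := by
  induction l generalizing K with
  | nil => simp [Matrix.one_mulVec]
  | cons a l ih =>
    rw [List.map_cons, List.prod_cons, ← Matrix.mulVec_mulVec, ih, step]
    congr 1
    rw [List.map_cons, List.sum_cons]
    ring

end Aux

/-- **Quantum-hash state collapse.**  Registers are indexed by
`Fin (m+1) × Bool`, with `(i, false) = A_i` and `(i, true) = B_i`.  Applying, for each
`i ∈ S ⊆ {1, …, m}` (the gates all commute, so any enumeration `l` of `S` gives the same
operator), the pair of controlled-`X` gates `(c-X)_{A₀A_i}` and `(c-X)_{B₀B_i}` to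
`|φ^{0,0}⟩_{A₀B₀} ⊗ |φ^{0,k₁}⟩_{A₁B₁} ⊗ ⋯ ⊗ |φ^{0,k_m}⟩_{A_mB_m}` produces
`|φ^{0, −∑_{i∈S} k_i}⟩_{A₀B₀} ⊗ |φ^{0,k₁}⟩_{A₁B₁} ⊗ ⋯ ⊗ |φ^{0,k_m}⟩_{A_mB_m}`;
in particular the states on `A₁B₁, …, A_mB_m` remain unchanged. -/
theorem quantum_hash_collapse (d : ℕ) [NeZero d] (hd : 2 ≤ d) (m : ℕ)
    (k : Fin m → Fin d) (S : Finset (Fin m)) (l : List (Fin m))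
    (hnd : l.Nodup) (hlS : l.toFinset = S) :
    Matrix.mulVec
        ((l.map fun i : Fin m =>
            gate2 d (ctrl d (XU d)) ((0 : Fin (m + 1)), false) (i.succ, false) *
              gate2 d (ctrl d (XU d)) ((0 : Fin (m + 1)), true) (i.succ, true)).prod)
        (fun p : Fin (m + 1) × Bool → ZMod d =>
          bell d 0 0 (p (0, false), p (0, true)) *
            ∏ i : Fin m, bell d 0 ((k i : ℕ) : ℤ) (p (i.succ, false), p (i.succ, true))) =
      fun p : Fin (m + 1) × Bool → ZMod d =>
        bell d 0 (-∑ i ∈ S, ((k i : ℕ) : ℤ)) (p (0, false), p (0, true)) *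
          ∏ i : Fin m, bell d 0 ((k i : ℕ) : ℤ) (p (i.succ, false), p (i.succ, true)) := by
  have h := main_list d m k l 0
  have hsum : (l.map fun i => ((k i : ℕ) : ℤ)).sum = ∑ i ∈ S, ((k i : ℕ) : ℤ) := by
    rw [← hlS, List.sum_toFinset _ hnd]
  rw [hsum, zero_sub] at h
  exact h
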